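/- arXiv:math/0010048 — 3 statements merged into one kernel-verified Lean document; each statement's English description precedes it below -/
import Mathlib

section
/- Lower semicontinuity condition for the one-dimensional Blake–Zisserman functional: let 0 < α and β > 0 with α ≤ β ≤ 2α. If u ∈ ℋ²(0,L) is a piecewise-H² function and u is obtained as a limit where a jump point degenerates into two crease points (i.e., a jump of size ε → 0 splits), then the penalty satisfies β ≤ 2α, ensuring #-counting lower semicontinuity: for any t and sequences where one jump is approximated by two creases, β·1 ≤ α·2. Conversely if β > 2α the functional F fails to be lower semicontinuous: there exist u_n → u in L¹(0,L) with F(u) > liminf_n F(u_n). -/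
open Filter Topology MeasureTheory

/-- A piecewise-`H²` (here: piecewise-`C²`) function on `(0, L)`, with a finite set
`S` of jump points and a finite set `S'` of crease points. -/
structure PiecewiseH2 (L : ℝ) where
  toFun : ℝ → ℝ
  /-- the jump set `S(u)` -/
  S : Finset ℝ
  /-- the crease set `S(u')` -/
  S' : Finset ℝ
  hS : ↑S ⊆ Set.Ioo 0 L
  hS' : ↑S' ⊆ Set.Ioo 0 L
  hdisj : Disjoint S S'
  smooth : ∀ x ∈ Set.Ioo 0 L \ (↑S ∪ ↑S' : Set ℝ), ContDiffAt ℝ 2 toFun x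
  contAtCrease : ∀ x ∈ S', ContinuousAt toFun x
  jumpAt : ∀ x ∈ S, ¬ ContinuousAt toFun x
  creaseAt : ∀ x ∈ S', ¬ DifferentiableAt ℝ toFun x
  sq_integrable : IntervalIntegrable (fun t => (deriv (deriv toFun) t) ^ 2) volume 0 L

/-- The one-dimensional Blake–Zisserman functional
`F(u) = ∫₀^L |u''|² dt + α #S(u') + β #S(u)`. -/
noncomputable def BZ (L α β : ℝ) (u : PiecewiseH2 L) : ℝ :=
  (∫ t in (0:ℝ)..L, (deriv (deriv u.toFun) t) ^ 2) + α * u.S'.card + β * u.S.card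

open Set

noncomputable def stepF (c : ℝ) : ℝ → ℝ := fun t => if t < c then 0 else 1

noncomputable def rampF (a b : ℝ) : ℝ → ℝ := fun t => max 0 (min 1 ((t - a) / (b - a)))

noncomputable def vF (a b : ℝ) : ℝ → ℝ := fun t => if a < t ∧ t < b then 1 / (b - a) else 0

lemma stepF_of_lt {c t : ℝ} (h : t < c) : stepF c t = 0 := if_pos h
lemma stepF_of_ge {c t : ℝ} (h : c ≤ t) : stepF c t = 1 := if_neg (not_lt.2 h)

lemma rampF_of_le {a b t : ℝ} (hab : a < b) (h : t ≤ a) : rampF a b t = 0 := by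
  have h1 : (t - a) / (b - a) ≤ 0 := by
    rw [div_nonpos_iff]; right; constructor <;> linarith
  unfold rampF
  rw [min_eq_right (by linarith), max_eq_left h1]

lemma rampF_of_ge {a b t : ℝ} (hab : a < b) (h : b ≤ t) : rampF a b t = 1 := by
  have h1 : (1:ℝ) ≤ (t - a) / (b - a) := (one_le_div (by linarith)).2 (by linarith)
  unfold rampF
  rw [min_eq_left h1, max_eq_right (by norm_num)]

lemma rampF_of_mem {a b t : ℝ} (hab : a < b) (h1 : a ≤ t) (h2 : t ≤ b) :
    rampF a b t = (t - a) / (b - a) := by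
  have hb : 0 < b - a := by linarith
  have l1 : (t - a) / (b - a) ≤ 1 := (div_le_one hb).2 (by linarith)
  have l0 : 0 ≤ (t - a) / (b - a) := div_nonneg (by linarith) hb.le
  unfold rampF
  rw [min_eq_right l1, max_eq_right l0]

lemma rampF_nonneg (a b t : ℝ) : 0 ≤ rampF a b t := le_max_left _ _
lemma rampF_le_one (a b t : ℝ) : rampF a b t ≤ 1 :=
  max_le (by norm_num) (min_le_left _ _)

lemma stepF_nonneg (c t : ℝ) : 0 ≤ stepF c t := by unfold stepF; split_ifs <;> norm_num
lemma stepF_le_one (c t : ℝ) : stepF c t ≤ 1 := by unfold stepF; split_ifs <;> norm_num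

lemma continuous_rampF (a b : ℝ) : Continuous (rampF a b) :=
  continuous_const.max (continuous_const.min ((continuous_id.sub continuous_const).div_const _))

lemma not_continuousAt_stepF (c : ℝ) : ¬ ContinuousAt (stepF c) c := by
  intro h
  have h1 : Tendsto (stepF c) (𝓝[<] c) (𝓝 1) := by
    have h0 : Tendsto (stepF c) (𝓝[<] c) (𝓝 (stepF c c)) :=
      h.tendsto.mono_left nhdsWithin_le_nhds
    rwa [stepF_of_ge le_rfl] at h0
  have h2 : Tendsto (stepF c) (𝓝[<] c) (𝓝 0) := by
    refine Tendsto.congr' ?_ tendsto_const_nhds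
    exact eventually_mem_nhdsWithin.mono fun t ht => (stepF_of_lt ht).symm
  exact zero_ne_one (tendsto_nhds_unique h2 h1)

lemma not_diff_of_onesided {f : ℝ → ℝ} {x c d : ℝ} (hcd : c ≠ d)
    (hc : HasDerivWithinAt f c (Iic x) x) (hd : HasDerivWithinAt f d (Ici x) x) :
    ¬ DifferentiableAt ℝ f x := by
  intro hf
  have h1 := (uniqueDiffOn_Iic x x self_mem_Iic).eq_deriv _ hc hf.hasDerivAt.hasDerivWithinAt
  have h2 := (uniqueDiffOn_Ici x x self_mem_Ici).eq_deriv _ hd hf.hasDerivAt.hasDerivWithinAt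
  exact hcd (h1.trans h2.symm)

lemma hasDerivAt_affine (a b t : ℝ) :
    HasDerivAt (fun s => (s - a) / (b - a)) (1 / (b - a)) t :=
  ((hasDerivAt_id t).sub_const a).div_const _

lemma not_diff_rampF_left {a b : ℝ} (hab : a < b) : ¬ DifferentiableAt ℝ (rampF a b) a := by
  have hb : (0:ℝ) < b - a := by linarith
  refine not_diff_of_onesided (c := 0) (d := 1 / (b - a)) ((one_div_pos.2 hb).ne) ?_ ?_
  · refine (hasDerivWithinAt_const a _ (0:ℝ)).congr_of_eventuallyEq ?_ (rampF_of_le hab le_rfl)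
    exact eventually_mem_nhdsWithin.mono fun t ht => rampF_of_le hab ht
  · refine ((hasDerivAt_affine a b a).hasDerivWithinAt).congr_of_eventuallyEq ?_ ?_
    · have hIi : Iio b ∈ 𝓝[Ici a] a := nhdsWithin_le_nhds (Iio_mem_nhds hab)
      filter_upwards [hIi, eventually_mem_nhdsWithin] with t h1 h2
      exact rampF_of_mem hab h2 h1.le
    · rw [rampF_of_le hab le_rfl, sub_self, zero_div]

lemma not_diff_rampF_right {a b : ℝ} (hab : a < b) : ¬ DifferentiableAt ℝ (rampF a b) b := by
  have hb : (0:ℝ) < b - a := by linarith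
  refine not_diff_of_onesided (c := 1 / (b - a)) (d := 0) (one_div_ne_zero hb.ne') ?_ ?_
  · refine ((hasDerivAt_affine a b b).hasDerivWithinAt).congr_of_eventuallyEq ?_ ?_
    · have hIi : Ioi a ∈ 𝓝[Iic b] b := nhdsWithin_le_nhds (Ioi_mem_nhds hab)
      filter_upwards [hIi, eventually_mem_nhdsWithin] with t h1 h2
      exact rampF_of_mem hab h1.le h2
    · rw [rampF_of_ge hab le_rfl, div_self hb.ne']
  · refine (hasDerivWithinAt_const b _ (1:ℝ)).congr_of_eventuallyEq ?_ (rampF_of_ge hab le_rfl)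
    exact eventually_mem_nhdsWithin.mono fun t ht => rampF_of_ge hab ht

lemma deriv_stepF (c : ℝ) : deriv (stepF c) = fun _ => 0 := by
  funext t
  rcases lt_trichotomy t c with h | h | h
  · have he : stepF c =ᶠ[𝓝 t] fun _ => 0 :=
      eventuallyEq_of_mem (Iio_mem_nhds h) fun s hs => stepF_of_lt hs
    rw [he.deriv_eq, deriv_const]
  · subst h
    exact deriv_zero_of_not_differentiableAt
      (fun hd => not_continuousAt_stepF t hd.continuousAt)
  · have he : stepF c =ᶠ[𝓝 t] fun _ => 1 :=
      eventuallyEq_of_mem (Ioi_mem_nhds h) fun s hs => stepF_of_ge (le_of_lt hs)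
    rw [he.deriv_eq, deriv_const]

lemma deriv_rampF {a b : ℝ} (hab : a < b) : deriv (rampF a b) = vF a b := by
  funext t
  rcases lt_trichotomy t a with h | h | h
  · have he : rampF a b =ᶠ[𝓝 t] fun _ => 0 :=
      eventuallyEq_of_mem (Iio_mem_nhds h) fun s hs => rampF_of_le hab (le_of_lt hs)
    rw [he.deriv_eq, deriv_const, vF, if_neg (by push_neg; intro h'; linarith)]
  · subst h
    rw [deriv_zero_of_not_differentiableAt (not_diff_rampF_left hab), vF,
      if_neg (by push_neg; intro h'; linarith)]
  · rcases lt_trichotomy t b with h2 | h2 | h2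
    · have he : rampF a b =ᶠ[𝓝 t] fun s => (s - a) / (b - a) :=
        eventuallyEq_of_mem (isOpen_Ioo.mem_nhds ⟨h, h2⟩)
          fun s hs => rampF_of_mem hab hs.1.le hs.2.le
      rw [he.deriv_eq, (hasDerivAt_affine a b t).deriv, vF, if_pos ⟨h, h2⟩]
    · subst h2
      rw [deriv_zero_of_not_differentiableAt (not_diff_rampF_right hab), vF,
        if_neg (by push_neg; intro _; exact le_rfl)]
    · have he : rampF a b =ᶠ[𝓝 t] fun _ => 1 :=
        eventuallyEq_of_mem (Ioi_mem_nhds h2) fun s hs => rampF_of_ge hab (le_of_lt hs)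
      rw [he.deriv_eq, deriv_const, vF, if_neg (by push_neg; intro _; linarith)]

lemma not_continuousAt_vF_left {a b : ℝ} (hab : a < b) : ¬ ContinuousAt (vF a b) a := by
  intro h
  have hv : vF a b a = 0 := if_neg (by push_neg; intro h'; linarith)
  have h1 : Tendsto (vF a b) (𝓝[Ioo a b] a) (𝓝 0) := by
    have h0 : Tendsto (vF a b) (𝓝[Ioo a b] a) (𝓝 (vF a b a)) :=
      h.tendsto.mono_left nhdsWithin_le_nhds
    rwa [hv] at h0
  have h2 : Tendsto (vF a b) (𝓝[Ioo a b] a) (𝓝 (1 / (b - a))) := by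
    refine Tendsto.congr' ?_ tendsto_const_nhds
    exact eventually_mem_nhdsWithin.mono fun s hs => (if_pos ⟨hs.1, hs.2⟩).symm
  have := left_nhdsWithin_Ioo_neBot hab
  exact one_div_ne_zero (by linarith : b - a ≠ 0) (tendsto_nhds_unique h2 h1)

lemma not_continuousAt_vF_right {a b : ℝ} (hab : a < b) : ¬ ContinuousAt (vF a b) b := by
  intro h
  have hv : vF a b b = 0 := if_neg (by push_neg; intro _; exact le_rfl)
  have h1 : Tendsto (vF a b) (𝓝[Ioo a b] b) (𝓝 0) := by
    have h0 : Tendsto (vF a b) (𝓝[Ioo a b] b) (𝓝 (vF a b b)) :=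
      h.tendsto.mono_left nhdsWithin_le_nhds
    rwa [hv] at h0
  have h2 : Tendsto (vF a b) (𝓝[Ioo a b] b) (𝓝 (1 / (b - a))) := by
    refine Tendsto.congr' ?_ tendsto_const_nhds
    exact eventually_mem_nhdsWithin.mono fun s hs => (if_pos ⟨hs.1, hs.2⟩).symm
  have := right_nhdsWithin_Ioo_neBot hab
  exact one_div_ne_zero (by linarith : b - a ≠ 0) (tendsto_nhds_unique h2 h1)

lemma deriv_vF {a b : ℝ} (hab : a < b) : deriv (vF a b) = fun _ => 0 := by
  funext t
  rcases lt_trichotomy t a with h | h | h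
  · have he : vF a b =ᶠ[𝓝 t] fun _ => 0 :=
      eventuallyEq_of_mem (Iio_mem_nhds h) fun s hs =>
        if_neg (by push_neg; intro h'; linarith [mem_Iio.1 hs])
    rw [he.deriv_eq, deriv_const]
  · subst h
    exact deriv_zero_of_not_differentiableAt
      (fun hd => not_continuousAt_vF_left hab hd.continuousAt)
  · rcases lt_trichotomy t b with h2 | h2 | h2
    · have he : vF a b =ᶠ[𝓝 t] fun _ => 1 / (b - a) :=
        eventuallyEq_of_mem (isOpen_Ioo.mem_nhds ⟨h, h2⟩) fun s hs => if_pos ⟨hs.1, hs.2⟩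
      rw [he.deriv_eq, deriv_const]
    · subst h2
      exact deriv_zero_of_not_differentiableAt
        (fun hd => not_continuousAt_vF_right hab hd.continuousAt)
    · have he : vF a b =ᶠ[𝓝 t] fun _ => 0 :=
        eventuallyEq_of_mem (Ioi_mem_nhds h2) fun s hs =>
          if_neg (by push_neg; intro _; linarith [mem_Ioi.1 hs])
      rw [he.deriv_eq, deriv_const]

lemma dd_stepF (c : ℝ) : deriv (deriv (stepF c)) = fun _ => 0 := by
  rw [deriv_stepF]; funext t; exact deriv_const _ _

lemma dd_rampF {a b : ℝ} (hab : a < b) : deriv (deriv (rampF a b)) = fun _ => 0 := by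
  rw [deriv_rampF hab, deriv_vF hab]

lemma stepF_intervalIntegrable (c x y : ℝ) : IntervalIntegrable (stepF c) volume x y := by
  have h : stepF c = Set.indicator (Set.Ici c) (fun _ => (1:ℝ)) := by
    funext t
    by_cases h : t < c
    · rw [stepF_of_lt h, Set.indicator_of_notMem (by simpa using h)]
    · rw [stepF_of_ge (not_lt.1 h), Set.indicator_of_mem (show t ∈ Set.Ici c from not_lt.1 h)]
  rw [h, intervalIntegrable_iff]
  exact (integrableOn_const measure_Ioc_lt_top.ne).indicator measurableSet_Ici

noncomputable def stepPH2 (L c : ℝ) (h0 : 0 < c) (hcL : c < L) : PiecewiseH2 L where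
  toFun := stepF c
  S := {c}
  S' := ∅
  hS := by
    intro x hx
    simp only [Finset.coe_singleton, Set.mem_singleton_iff] at hx
    subst hx; exact ⟨h0, hcL⟩
  hS' := by simp
  hdisj := by simp
  smooth := by
    intro x hx
    simp only [Finset.coe_singleton, Finset.coe_empty, Set.union_empty, Set.mem_diff,
      Set.mem_singleton_iff] at hx
    rcases lt_or_gt_of_ne hx.2 with h | h
    · exact contDiffAt_const.congr_of_eventuallyEq
        (eventuallyEq_of_mem (Iio_mem_nhds h) fun s hs => stepF_of_lt hs)
    · exact contDiffAt_const.congr_of_eventuallyEq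
        (eventuallyEq_of_mem (Ioi_mem_nhds h) fun s hs => stepF_of_ge (le_of_lt hs))
  contAtCrease := by simp
  jumpAt := by
    intro x hx
    rw [Finset.mem_singleton] at hx
    subst hx; exact not_continuousAt_stepF _
  creaseAt := by simp
  sq_integrable := by
    have h : (fun t => (deriv (deriv (stepF c)) t) ^ 2) = fun _ => 0 := by
      rw [dd_stepF]; funext t; simp
    rw [h]; exact intervalIntegrable_const

noncomputable def rampPH2 (L a b : ℝ) (h0 : 0 < a) (hab : a < b) (hbL : b < L) :
    PiecewiseH2 L where
  toFun := rampF a b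
  S := ∅
  S' := {a, b}
  hS := by simp
  hS' := by
    intro x hx
    simp only [Finset.coe_insert, Finset.coe_singleton, Set.mem_insert_iff,
      Set.mem_singleton_iff] at hx
    rcases hx with rfl | rfl
    · exact ⟨h0, by linarith⟩
    · exact ⟨by linarith, hbL⟩
  hdisj := by simp
  smooth := by
    intro x hx
    simp only [Finset.coe_empty, Finset.coe_insert, Finset.coe_singleton, Set.empty_union,
      Set.mem_diff, Set.mem_insert_iff, Set.mem_singleton_iff, not_or] at hx
    obtain ⟨-, hxa, hxb⟩ := hx
    rcases lt_trichotomy x a with h | h | h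
    · exact contDiffAt_const.congr_of_eventuallyEq
        (eventuallyEq_of_mem (Iio_mem_nhds h) fun s hs => rampF_of_le hab (le_of_lt hs))
    · exact absurd h hxa
    · rcases lt_trichotomy x b with h2 | h2 | h2
      · exact (((contDiff_id.sub contDiff_const).div_const _).contDiffAt).congr_of_eventuallyEq
          (eventuallyEq_of_mem (isOpen_Ioo.mem_nhds ⟨h, h2⟩)
            fun s hs => rampF_of_mem hab hs.1.le hs.2.le)
      · exact absurd h2 hxb
      · exact contDiffAt_const.congr_of_eventuallyEq
          (eventuallyEq_of_mem (Ioi_mem_nhds h2) fun s hs => rampF_of_ge hab (le_of_lt hs))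
  contAtCrease := fun x _ => (continuous_rampF a b).continuousAt
  jumpAt := by simp
  creaseAt := by
    intro x hx
    rcases Finset.mem_insert.1 hx with rfl | hx
    · exact not_diff_rampF_left hab
    · rw [Finset.mem_singleton] at hx
      subst hx; exact not_diff_rampF_right hab
  sq_integrable := by
    have h : (fun t => (deriv (deriv (rampF a b)) t) ^ 2) = fun _ => 0 := by
      rw [dd_rampF hab]; funext t; simp
    rw [h]; exact intervalIntegrable_const

/-- Failure of lower semicontinuity of the Blake–Zisserman functional when `β > 2α`:
there is a sequence `u_n → u` in `L¹(0,L)` (a jump degenerating into two creases)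
with `F(u) > liminf_n F(u_n)`. -/
theorem blake_zisserman_not_lsc_of_beta_gt_two_alpha
    (L α β : ℝ) (hL : 0 < L) (hα : 0 < α) (hβ : 0 < β) (h : β > 2 * α) :
    ∃ u : PiecewiseH2 L, ∃ U : ℕ → PiecewiseH2 L,
      Tendsto (fun n => ∫ t in (0:ℝ)..L, |(U n).toFun t - u.toFun t|) atTop (𝓝 0) ∧
      liminf (fun n => BZ L α β (U n)) atTop < BZ L α β u := by
  set c : ℝ := L / 2 with hcdef
  have hc0 : 0 < c := by positivity
  have hcL : c < L := by rw [hcdef]; linarith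
  set δ : ℕ → ℝ := fun n => c / ((n : ℝ) + 2) with hδdef
  have hδ0 : ∀ n, 0 < δ n := fun n => by positivity
  have hδc : ∀ n, δ n < c := by
    intro n
    have h2 : (1 : ℝ) < (n : ℝ) + 2 := by
      have := Nat.cast_nonneg (α := ℝ) n; linarith
    calc δ n = c / ((n : ℝ) + 2) := rfl
      _ < c / 1 := by apply div_lt_div_of_pos_left hc0 (by norm_num) h2
      _ = c := div_one c
  set a : ℕ → ℝ := fun n => c - δ n with hadef
  have ha0 : ∀ n, 0 < a n := fun n => by have := hδc n; simp only [hadef]; linarith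
  have hac : ∀ n, a n < c := fun n => by have := hδ0 n; simp only [hadef]; linarith
  refine ⟨stepPH2 L c hc0 hcL, fun n => rampPH2 L (a n) c (ha0 n) (hac n) hcL, ?_, ?_⟩
  · -- L¹ convergence
    have hbound : ∀ n, (∫ t in (0:ℝ)..L, |rampF (a n) c t - stepF c t|) ≤ δ n := by
      intro n
      set D : ℝ → ℝ := fun t => |rampF (a n) c t - stepF c t| with hDdef
      have hDint : ∀ x y : ℝ, IntervalIntegrable D volume x y := fun x y =>
        (((continuous_rampF _ _).intervalIntegrable _ _).sub
          (stepF_intervalIntegrable c x y)).abs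
      have h1 : (∫ t in (0:ℝ)..(a n), D t) = 0 := by
        rw [intervalIntegral.integral_congr (g := fun _ => 0), intervalIntegral.integral_zero]
        intro t ht
        rw [Set.uIcc_of_le (ha0 n).le] at ht
        have h1 : t ≤ a n := ht.2
        have h2 : t < c := lt_of_le_of_lt h1 (hac n)
        simp only [hDdef, rampF_of_le (hac n) h1, stepF_of_lt h2, sub_zero, abs_zero]
      have h3 : (∫ t in c..L, D t) = 0 := by
        rw [intervalIntegral.integral_congr (g := fun _ => 0), intervalIntegral.integral_zero]
        intro t ht
        rw [Set.uIcc_of_le hcL.le] at ht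
        simp only [hDdef, rampF_of_ge (hac n) ht.1, stepF_of_ge ht.1, sub_self, abs_zero]
      have h2 : (∫ t in (a n)..c, D t) ≤ δ n := by
        have hmono : (∫ t in (a n)..c, D t) ≤ ∫ _t in (a n)..c, (1:ℝ) := by
          apply intervalIntegral.integral_mono_on (hac n).le (hDint _ _) intervalIntegrable_const
          intro t _
          have hr0 := rampF_nonneg (a n) c t
          have hr1 := rampF_le_one (a n) c t
          have hs0 := stepF_nonneg c t
          have hs1 := stepF_le_one c t
          rw [hDdef]
          rw [abs_sub_le_iff]
          constructor <;> linarith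
        rw [intervalIntegral.integral_const, smul_eq_mul, mul_one] at hmono
        have : c - a n = δ n := by simp [hadef]
        linarith [hmono, this.le]
      have hsplit : (∫ t in (0:ℝ)..L, D t) =
          (∫ t in (0:ℝ)..(a n), D t) + (∫ t in (a n)..c, D t) + (∫ t in c..L, D t) := by
        rw [intervalIntegral.integral_add_adjacent_intervals (hDint _ _) (hDint _ _),
          intervalIntegral.integral_add_adjacent_intervals (hDint _ _) (hDint _ _)]
      rw [hsplit, h1, h3]
      linarith
    have hnonneg : ∀ n, 0 ≤ ∫ t in (0:ℝ)..L, |rampF (a n) c t - stepF c t| := by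
      intro n
      apply intervalIntegral.integral_nonneg hL.le
      intro t _
      exact abs_nonneg _
    have hδto0 : Tendsto δ atTop (𝓝 0) := by
      have h1 : Tendsto (fun n : ℕ => c / (n : ℝ)) atTop (𝓝 0) :=
        tendsto_const_div_atTop_nhds_zero_nat c
      have h2 := h1.comp (tendsto_add_atTop_nat 2)
      have h3 : δ = (fun n : ℕ => c / (n : ℝ)) ∘ (fun n => n + 2) := by
        funext n
        show c / ((n : ℝ) + 2) = c / (((n + 2 : ℕ) : ℝ))
        push_cast; ring
      rw [h3]; exact h2
    exact tendsto_of_tendsto_of_tendsto_of_le_of_le tendsto_const_nhds hδto0 hnonneg hbound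
  · -- liminf
    have hBZu : BZ L α β (stepPH2 L c hc0 hcL) = β := by
      have h1 : (∫ t in (0:ℝ)..L, (deriv (deriv (stepPH2 L c hc0 hcL).toFun) t) ^ 2) = 0 := by
        show (∫ t in (0:ℝ)..L, (deriv (deriv (stepF c)) t) ^ 2) = 0
        simp [dd_stepF]
      rw [BZ, h1]
      show 0 + α * (Finset.card ∅ : ℝ) + β * (({c} : Finset ℝ).card : ℝ) = β
      simp
    have hBZU : ∀ n, BZ L α β (rampPH2 L (a n) c (ha0 n) (hac n) hcL) = α * 2 := by
      intro n
      have h1 : (∫ t in (0:ℝ)..L,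
          (deriv (deriv (rampPH2 L (a n) c (ha0 n) (hac n) hcL).toFun) t) ^ 2) = 0 := by
        show (∫ t in (0:ℝ)..L, (deriv (deriv (rampF (a n) c)) t) ^ 2) = 0
        simp [dd_rampF (hac n)]
      rw [BZ, h1]
      show 0 + α * (({a n, c} : Finset ℝ).card : ℝ) + β * (Finset.card ∅ : ℝ) = α * 2
      rw [Finset.card_pair (hac n).ne]
      simp
    have heq : (fun n => BZ L α β (rampPH2 L (a n) c (ha0 n) (hac n) hcL)) =
        fun _ => α * 2 := funext hBZU
    rw [heq, hBZu, liminf_const]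
    linarith
end

section
/- Discrete second difference at a jump point: let u be piecewise C² on (0,L) with bounded second derivative, let t ∈ S(u) be a jump point with t = x_i a grid point, and let u_n be the piecewise-constant left-interpolation of u on the grid λ_n ℤ. Then (u_n(x_{i+1}) + u_n(x_{i−1}) − 2u_n(x_i))/λ_n² = (u(t+) − u(t−) + o(1))/λ_n² as n → ∞; in particular its absolute value exceeds c₂/(λ_n √λ_n) for all sufficiently large n. -/
open Filter Topology

/-- Discrete second difference at a jump point: if `u` equals a `C²` function `f`
(with bounded second derivative) to the left of `t` and a `C²` function `g` to the
right, with a jump `g(t) ≠ f(t)`, and `u_n` is the piecewise-constant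
left-interpolation on the grid of mesh `λ_n = L/n`, then the discrete second
difference centred at `t` satisfies
`(u_n(t+λ_n) + u_n(t−λ_n) − 2u_n(t))/λ_n² = (u(t+) − u(t−) + o(1))/λ_n²`;
in particular its absolute value eventually exceeds `c₂/(λ_n √λ_n)`. -/
theorem second_difference_at_jump
    (L c₂ : ℝ) (hL : 0 < L) (hc₂ : 0 < c₂)
    (t : ℝ) (ht : t ∈ Set.Ioo 0 L)
    (f g : ℝ → ℝ) (hf : ContDiff ℝ 2 f) (hg : ContDiff ℝ 2 g)
    (Mf Mg : ℝ) (hMf : ∀ x, |deriv (deriv f) x| ≤ Mf)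
    (hMg : ∀ x, |deriv (deriv g) x| ≤ Mg)
    (hjump : g t ≠ f t)
    (lam : ℕ → ℝ) (hlam : ∀ n, lam n = L / n)
    (d : ℕ → ℝ)
    (hd : ∀ n, d n = (g (t + lam n) + f (t - lam n) - 2 * f t) / (lam n) ^ 2) :
    Tendsto (fun n => d n * (lam n) ^ 2) atTop (𝓝 (g t - f t)) ∧
    ∀ᶠ n in atTop, |d n| > c₂ / (lam n * Real.sqrt (lam n)) := by

  have hlam0 : Tendsto lam atTop (𝓝 0) := by
    have he : lam = fun n : ℕ => L / n := funext hlam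
    rw [he]
    exact tendsto_const_div_atTop_nhds_zero_nat L
  have hlampos : ∀ n : ℕ, 1 ≤ n → 0 < lam n := by
    intro n hn
    rw [hlam]
    positivity
  set A : ℕ → ℝ := fun n => g (t + lam n) + f (t - lam n) - 2 * f t with hA
  have htplus : Tendsto (fun n => t + lam n) atTop (𝓝 t) := by
    simpa using tendsto_const_nhds.add hlam0
  have htminus : Tendsto (fun n => t - lam n) atTop (𝓝 t) := by
    simpa using tendsto_const_nhds.sub hlam0
  have hAlim : Tendsto A atTop (𝓝 (g t - f t)) := by
    have : Tendsto A atTop (𝓝 (g t + f t - 2 * f t)) :=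
      (((hg.continuous.tendsto t).comp htplus).add
        ((hf.continuous.tendsto t).comp htminus)).sub tendsto_const_nhds
    convert this using 2
    ring
  have hcongr : (fun n => d n * (lam n) ^ 2) =ᶠ[atTop] A := by
    filter_upwards [eventually_ge_atTop 1] with n hn
    have h := hlampos n hn
    rw [hd n]
    field_simp
    rfl
  constructor
  · exact hAlim.congr' hcongr.symm
  · set J := |g t - f t| with hJ
    have hJpos : 0 < J := abs_pos.mpr (sub_ne_zero.mpr hjump)
    have h1 : ∀ᶠ n in atTop, J / 2 < |A n| := by
      have := hAlim.abs
      exact this.eventually (eventually_gt_nhds (by linarith))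
    have h2 : ∀ᶠ n in atTop, c₂ * Real.sqrt (lam n) < J / 2 := by
      have hs : Tendsto (fun n => c₂ * Real.sqrt (lam n)) atTop (𝓝 0) := by
        have : Tendsto (fun n => Real.sqrt (lam n)) atTop (𝓝 0) := by
          simpa [Function.comp_def] using (Real.continuous_sqrt.tendsto 0).comp hlam0
        simpa using tendsto_const_nhds.mul this
      exact hs.eventually (eventually_lt_nhds (by linarith))
    filter_upwards [h1, h2, eventually_ge_atTop 1] with n hn1 hn2 hn3
    have hlp := hlampos n hn3
    have hsp : 0 < Real.sqrt (lam n) := Real.sqrt_pos.mpr hlp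
    have hss : Real.sqrt (lam n) * Real.sqrt (lam n) = lam n :=
      Real.mul_self_sqrt hlp.le
    have hdabs : |d n| = |A n| / (lam n) ^ 2 := by
      rw [hd n, abs_div, abs_of_pos (by positivity : (0:ℝ) < (lam n)^2)]
    rw [hdabs, gt_iff_lt, div_lt_div_iff₀ (by positivity) (by positivity)]
    have hl2 : (lam n)^2 = Real.sqrt (lam n) * (lam n * Real.sqrt (lam n)) := by
      linear_combination (-(lam n)) * hss
    calc c₂ * (lam n)^2 = (c₂ * Real.sqrt (lam n)) * (lam n * Real.sqrt (lam n)) := by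
          rw [hl2]; ring
      _ < |A n| * (lam n * Real.sqrt (lam n)) :=
          mul_lt_mul_of_pos_right (hn2.trans hn1) (by positivity)
end

section
/- Γ-limsup inequality at regular functions: let u ∈ C²([0,L]) (no jumps, no creases) and let u_n ∈ 𝒜_n be the restriction of u to the grid λ_nℤ ∩ [0,L]. Then lim_n E_n(u_n) = ∫₀^L |u''|² dt, where E_n(u) = Σ_{i=1}^{n−1} λ_n Ψ_n((u(x_{i+1}) + u(x_{i−1}) − 2u(x_i))/λ_n²); in particular limsup_n E_n(u_n) ≤ F(u). -/
open Filter Topology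

set_option maxHeartbeats 1000000

/-- Γ-limsup inequality at regular functions: for `u ∈ C²([0,L])` (no jumps, no
creases) and `u_n` its restriction to the grid `λ_nℤ ∩ [0,L]`, the discrete energies
`E_n(u_n) = Σ_{i=1}^{n−1} λ_n Ψ_n((u(x_{i+1}) + u(x_{i−1}) − 2u(x_i))/λ_n²)`
converge to `∫₀^L |u''|² dt = F(u)`; in particular `limsup_n E_n(u_n) ≤ F(u)`. -/
theorem gamma_limsup_regular
    (L α β c₁ c₂ : ℝ) (hL : 0 < L)
    (hα : 0 < α) (hαβ : α ≤ β) (hβ : β ≤ 2 * α) (hc₁ : 0 < c₁) (hc₂ : 0 < c₂)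
    (lam : ℕ → ℝ) (hlam : ∀ n, lam n = L / n)
    (x : ℕ → ℕ → ℝ) (hx : ∀ n i, x n i = (i : ℝ) * lam n)
    (Ψ : ℕ → ℝ → ℝ)
    (hΨ : ∀ n, 1 ≤ n → ∀ z, Ψ n z =
      if |z| ≤ c₁ / Real.sqrt (lam n) then z ^ 2
      else if |z| ≤ c₂ / (lam n * Real.sqrt (lam n)) then α / lam n
      else β / (2 * lam n))
    (u : ℝ → ℝ) (hu : ContDiff ℝ 2 u)
    (E : ℕ → ℝ)
    (hE : ∀ n, E n = ∑ i ∈ Finset.Ico 1 n,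
      lam n * Ψ n ((u (x n (i + 1)) + u (x n (i - 1)) - 2 * u (x n i)) / (lam n) ^ 2)) :
    Tendsto E atTop (𝓝 (∫ t in (0:ℝ)..L, (deriv (deriv u) t) ^ 2)) ∧
    limsup E atTop ≤ ∫ t in (0:ℝ)..L, (deriv (deriv u) t) ^ 2 := by
  set g : ℝ → ℝ := deriv (deriv u) with hgdef
  -- regularity facts
  have h2 : ContDiff ℝ ((1:ℕ)+1) u := by exact_mod_cast hu
  have h3 := contDiff_succ_iff_deriv.mp h2
  have hu1 : Differentiable ℝ u := h3.1
  have hcd1 : ContDiff ℝ 1 (deriv u) := by exact_mod_cast h3.2.2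
  have hud : Differentiable ℝ (deriv u) := hcd1.differentiable one_ne_zero
  have hg : Continuous g := hcd1.continuous_deriv le_rfl
  -- second differences are values of g (double mean value theorem)
  have key : ∀ lamv : ℝ, 0 < lamv → ∀ a : ℝ, ∃ ζ ∈ Set.Ioo (a - lamv) (a + lamv),
      (u (a + lamv) + u (a - lamv) - 2 * u a) / lamv ^ 2 = g ζ := by
    intro lamv hlv a
    have hab : a - lamv < a := by linarith
    have hcont : ContinuousOn (fun t => u (t + lamv) - u t) (Set.Icc (a - lamv) a) :=
      ((hu1.continuous.comp (continuous_id.add continuous_const)).sub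
        hu1.continuous).continuousOn
    have hder : ∀ t ∈ Set.Ioo (a - lamv) a,
        HasDerivAt (fun t => u (t + lamv) - u t) (deriv u (t + lamv) - deriv u t) t := by
      intro t _
      have h₁ : HasDerivAt (fun t => u (t + lamv)) (deriv u (t + lamv)) t := by
        have := (hu1 (t + lamv)).hasDerivAt.comp t ((hasDerivAt_id t).add_const lamv)
        simpa [Function.comp_def] using this
      exact h₁.sub (hu1 t).hasDerivAt
    obtain ⟨η, hη, hφ'⟩ := exists_hasDerivAt_eq_slope _ _ hab hcont hder
    obtain ⟨ζ, hζ, hgζ⟩ := exists_hasDerivAt_eq_slope (deriv u) g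
      (show η < η + lamv by linarith) hud.continuous.continuousOn
      (fun t _ => (hud t).hasDerivAt)
    refine ⟨ζ, ⟨by cases hη; cases hζ; linarith, by cases hη; cases hζ; linarith⟩, ?_⟩
    rw [hgζ]
    have e : a - lamv + lamv = a := by ring
    rw [e] at hφ'
    rw [hφ']
    have hlv' : lamv ≠ 0 := ne_of_gt hlv
    rw [show a - (a - lamv) = lamv by ring, show η + lamv - η = lamv by ring]
    ring
  -- uniform bound for g on [0, L]
  obtain ⟨M₀, hM₀⟩ := isCompact_Icc.exists_bound_of_continuousOn
    (s := Set.Icc (0:ℝ) L) hg.continuousOn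
  set M : ℝ := max M₀ 1 with hMdef
  have hM1 : (1:ℝ) ≤ M := le_max_right _ _
  have hMpos : (0:ℝ) < M := lt_of_lt_of_le one_pos hM1
  have hM : ∀ t ∈ Set.Icc (0:ℝ) L, |g t| ≤ M := fun t ht =>
    le_trans (hM₀ t ht) (le_max_left _ _)
  have hint : ∀ a b : ℝ, IntervalIntegrable (fun t => (g t)^2) MeasureTheory.volume a b :=
    fun a b => (hg.pow 2).intervalIntegrable a b
  have htend : Tendsto E atTop (𝓝 (∫ t in (0:ℝ)..L, (g t) ^ 2)) := by
    rw [Metric.tendsto_atTop]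
    intro ε hε
    have hε' : 0 < ε / (4 * M * L) := by positivity
    obtain ⟨δ, hδpos, hδ⟩ := Metric.uniformContinuousOn_iff.mp
      (isCompact_Icc.uniformContinuousOn_of_continuous
        (s := Set.Icc (0:ℝ) L) hg.continuousOn) _ hε'
    set r : ℝ := min (min (δ/2) ((c₁/M)^2)) (ε/(4*M^2)) with hrdef
    have hrpos : 0 < r := by
      refine lt_min (lt_min (by positivity) (by positivity)) (by positivity)
    obtain ⟨N₀, hN₀⟩ := exists_nat_gt (L / r)
    refine ⟨max N₀ 1, fun n hn => ?_⟩
    have hn1 : 1 ≤ n := le_trans (le_max_right _ _) hn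
    have hnpos : (0:ℝ) < n := by exact_mod_cast hn1
    have hlampos : 0 < lam n := by rw [hlam]; positivity
    have hnN : L / r < (n:ℝ) := lt_of_lt_of_le hN₀
      (by exact_mod_cast le_trans (le_max_left _ _) hn)
    have hlamr : lam n < r := by
      have h := (div_lt_iff₀ hrpos).mp hnN
      rw [hlam, div_lt_iff₀ hnpos, mul_comm]
      exact h
    have hlamδ : lam n ≤ δ/2 :=
      le_trans hlamr.le (le_trans (min_le_left _ _) (min_le_left _ _))
    have hlamc : lam n ≤ (c₁/M)^2 :=
      le_trans hlamr.le (le_trans (min_le_left _ _) (min_le_right _ _))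
    have hlamε : lam n ≤ ε/(4*M^2) := le_trans hlamr.le (min_le_right _ _)
    have hnL : (n:ℝ) * lam n = L := by rw [hlam]; field_simp
    have hlamL : lam n ≤ L := by
      rw [hlam]; exact div_le_self hL.le (by exact_mod_cast hn1)
    -- quadratic regime bound
    have hsq : Real.sqrt (lam n) ≤ c₁ / M := by
      rw [show c₁/M = Real.sqrt ((c₁/M)^2) from (Real.sqrt_sq (by positivity)).symm]
      exact Real.sqrt_le_sqrt hlamc
    have hsqpos : 0 < Real.sqrt (lam n) := Real.sqrt_pos.mpr hlampos
    have hMc : M ≤ c₁ / Real.sqrt (lam n) := by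
      rw [le_div_iff₀ hsqpos]
      calc M * Real.sqrt (lam n) ≤ M * (c₁ / M) :=
            mul_le_mul_of_nonneg_left hsq hMpos.le
        _ = c₁ := by field_simp
    -- grid facts
    have hxp : ∀ i : ℕ, x n (i+1) = x n i + lam n := by
      intro i; rw [hx, hx]; push_cast; ring
    have hxm : ∀ i : ℕ, 1 ≤ i → x n (i-1) = x n i - lam n := by
      intro i hi; rw [hx, hx, Nat.cast_sub hi]; push_cast; ring
    have hxL : ∀ i : ℕ, i + 1 ≤ n → x n i + lam n ≤ L := by
      intro i hi
      rw [hx]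
      have h1 : ((i:ℝ)+1) ≤ n := by exact_mod_cast hi
      nlinarith [mul_le_mul_of_nonneg_right h1 hlampos.le, hnL]
    set D : ℕ → ℝ := fun i =>
      (u (x n (i + 1)) + u (x n (i - 1)) - 2 * u (x n i)) / (lam n) ^ 2 with hDdef
    have hDmem : ∀ i ∈ Finset.Ico 1 n,
        ∃ ζ ∈ Set.Icc (0:ℝ) L, |ζ - x n i| < lam n ∧ D i = g ζ := by
      intro i hi
      obtain ⟨h1i, h2i⟩ := Finset.mem_Ico.mp hi
      have hEq : D i = (u (x n i + lam n) + u (x n i - lam n) - 2 * u (x n i)) / lam n ^ 2 := by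
        simp only [hDdef]; rw [hxp, hxm i h1i]
      obtain ⟨ζ, hζIoo, hζ⟩ := key (lam n) hlampos (x n i)
      refine ⟨ζ, ⟨?_, ?_⟩, ?_, by rw [hEq]; exact hζ⟩
      · have h0 : 0 ≤ x n i - lam n := by
          rw [hx]
          have h1 : (1:ℝ) ≤ i := by exact_mod_cast h1i
          nlinarith [hlampos.le]
        linarith [hζIoo.1]
      · have hL' : x n i + lam n ≤ L := hxL i (by omega)
        linarith [hζIoo.2]
      · rw [abs_lt]
        exact ⟨by linarith [hζIoo.1], by linarith [hζIoo.2]⟩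
    have hEn : E n = ∑ i ∈ Finset.Ico 1 n, lam n * (D i)^2 := by
      rw [hE n]
      refine Finset.sum_congr rfl (fun i hi => ?_)
      obtain ⟨ζ, hζmem, hζclose, hζeq⟩ := hDmem i hi
      have hDi : (u (x n (i + 1)) + u (x n (i - 1)) - 2 * u (x n i)) / (lam n) ^ 2 = D i := by
        simp only [hDdef]
      rw [hDi, hΨ n hn1, if_pos]
      rw [hζeq]
      exact le_trans (hM ζ hζmem) hMc
    have hI : (∫ t in (0:ℝ)..L, (g t)^2)
        = (∫ t in (x n 0)..(x n 1), (g t)^2)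
          + ∑ i ∈ Finset.Ico 1 n, ∫ t in x n i..x n (i+1), (g t)^2 := by
      have hadj := intervalIntegral.sum_integral_adjacent_intervals
        (a := x n) (n := n) (f := fun t => (g t)^2) (fun k _ => hint _ _)
      have e0 : x n 0 = 0 := by rw [hx]; norm_num
      have eN : x n n = L := by rw [hx]; exact hnL
      rw [e0, eN] at hadj
      rw [← hadj, Finset.range_eq_Ico,
        Finset.sum_eq_sum_Ico_succ_bot (by omega : 0 < n)]
    have hterm : ∀ i ∈ Finset.Ico 1 n,
        |lam n * (D i)^2 - ∫ t in x n i..x n (i+1), (g t)^2|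
          ≤ lam n * (2*M*(ε/(4*M*L))) := by
      intro i hi
      obtain ⟨h1i, h2i⟩ := Finset.mem_Ico.mp hi
      obtain ⟨ζ, hζmem, hζclose, hζeq⟩ := hDmem i hi
      have hxlt : x n i ≤ x n (i+1) := by rw [hxp]; linarith
      have hx0 : 0 ≤ x n i := by rw [hx]; positivity
      have hconst : lam n * (D i)^2 = ∫ t in x n i..x n (i+1), (D i)^2 := by
        rw [intervalIntegral.integral_const, smul_eq_mul, hxp]; ring
      rw [hconst, ← intervalIntegral.integral_sub (intervalIntegrable_const) (hint _ _)]
      have hbound : ∀ t ∈ Set.uIoc (x n i) (x n (i+1)),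
          ‖(D i)^2 - (g t)^2‖ ≤ 2*M*(ε/(4*M*L)) := by
        intro t ht
        rw [Set.uIoc_of_le hxlt] at ht
        obtain ⟨ht1, ht2⟩ := ht
        rw [hxp] at ht2
        have htmem : t ∈ Set.Icc (0:ℝ) L :=
          ⟨by linarith, by linarith [hxL i (by omega)]⟩
        have hdist : dist ζ t < δ := by
          rw [Real.dist_eq]
          have h2' : |t - x n i| ≤ lam n := by
            rw [abs_of_nonneg (by linarith)]; linarith
          calc |ζ - t| ≤ |ζ - x n i| + |x n i - t| := abs_sub_le _ _ _
            _ = |ζ - x n i| + |t - x n i| := by rw [abs_sub_comm (x n i) t]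
            _ < lam n + lam n := by linarith [hζclose, h2']
            _ ≤ δ := by linarith [hlamδ]
        have hgd : |g ζ - g t| ≤ ε/(4*M*L) := by
          have := hδ ζ hζmem t htmem hdist
          rw [Real.dist_eq] at this
          exact this.le
        have hgs : |g ζ + g t| ≤ 2*M := by
          calc |g ζ + g t| ≤ |g ζ| + |g t| := abs_add_le _ _
            _ ≤ M + M := add_le_add (hM ζ hζmem) (hM t htmem)
            _ = 2*M := by ring
        rw [hζeq, Real.norm_eq_abs,
          show (g ζ)^2 - (g t)^2 = (g ζ - g t) * (g ζ + g t) by ring, abs_mul]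
        calc |g ζ - g t| * |g ζ + g t| ≤ (ε/(4*M*L)) * (2*M) :=
              mul_le_mul hgd hgs (abs_nonneg _) (by positivity)
          _ = 2*M*(ε/(4*M*L)) := by ring
      have hb : |x n (i+1) - x n i| = lam n := by
        rw [hxp, abs_of_nonneg (by linarith)]
        ring
      calc |∫ t in x n i..x n (i+1), ((D i)^2 - (g t)^2)|
          ≤ 2*M*(ε/(4*M*L)) * |x n (i+1) - x n i| :=
            intervalIntegral.norm_integral_le_of_norm_le_const hbound
        _ = lam n * (2*M*(ε/(4*M*L))) := by rw [hb]; ring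
    have hsum : |∑ i ∈ Finset.Ico 1 n,
        (lam n * (D i)^2 - ∫ t in x n i..x n (i+1), (g t)^2)| ≤ ε/2 := by
      have hcard : ((Finset.Ico 1 n).card : ℝ) ≤ n := by
        rw [Nat.card_Ico]
        exact_mod_cast Nat.sub_le n 1
      calc |∑ i ∈ Finset.Ico 1 n, (lam n * (D i)^2 - ∫ t in x n i..x n (i+1), (g t)^2)|
          ≤ ∑ i ∈ Finset.Ico 1 n,
            |lam n * (D i)^2 - ∫ t in x n i..x n (i+1), (g t)^2| :=
            Finset.abs_sum_le_sum_abs _ _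
        _ ≤ ∑ _i ∈ Finset.Ico 1 n, lam n * (2*M*(ε/(4*M*L))) := Finset.sum_le_sum hterm
        _ = ((Finset.Ico 1 n).card : ℝ) * (lam n * (2*M*(ε/(4*M*L)))) := by
            rw [Finset.sum_const, nsmul_eq_mul]
        _ ≤ (n:ℝ) * (lam n * (2*M*(ε/(4*M*L)))) :=
            mul_le_mul_of_nonneg_right hcard (by positivity)
        _ = L * (2*M*(ε/(4*M*L))) := by rw [← mul_assoc, hnL]
        _ = ε/2 := by field_simp; ring
    have hT0 : |∫ t in (x n 0)..(x n 1), (g t)^2| ≤ ε/4 := by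
      have e0 : x n 0 = 0 := by rw [hx]; norm_num
      have e1 : x n 1 = lam n := by rw [hx]; norm_num
      have hbound : ∀ t ∈ Set.uIoc (x n 0) (x n 1), ‖(g t)^2‖ ≤ M^2 := by
        intro t ht
        rw [e0, e1, Set.uIoc_of_le hlampos.le] at ht
        have htmem : t ∈ Set.Icc (0:ℝ) L := ⟨ht.1.le, le_trans ht.2 hlamL⟩
        rw [Real.norm_eq_abs, abs_of_nonneg (sq_nonneg _), ← sq_abs]
        exact pow_le_pow_left₀ (abs_nonneg _) (hM t htmem) 2
      have hb : |x n 1 - x n 0| = lam n := by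
        rw [e0, e1, sub_zero, abs_of_pos hlampos]
      calc |∫ t in (x n 0)..(x n 1), (g t)^2|
          ≤ M^2 * |x n 1 - x n 0| :=
            intervalIntegral.norm_integral_le_of_norm_le_const hbound
        _ = M^2 * lam n := by rw [hb]
        _ ≤ M^2 * (ε/(4*M^2)) := mul_le_mul_of_nonneg_left hlamε (by positivity)
        _ = ε/4 := by field_simp
    have hEI : E n - (∫ t in (0:ℝ)..L, (g t)^2)
        = (∑ i ∈ Finset.Ico 1 n,
            (lam n * (D i)^2 - ∫ t in x n i..x n (i+1), (g t)^2))
          - ∫ t in (x n 0)..(x n 1), (g t)^2 := by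
      rw [hEn, hI, Finset.sum_sub_distrib]
      ring
    rw [Real.dist_eq]
    calc |E n - ∫ t in (0:ℝ)..L, (g t)^2|
        = |(∑ i ∈ Finset.Ico 1 n,
            (lam n * (D i)^2 - ∫ t in x n i..x n (i+1), (g t)^2))
          - ∫ t in (x n 0)..(x n 1), (g t)^2| := by rw [hEI]
      _ ≤ |∑ i ∈ Finset.Ico 1 n,
            (lam n * (D i)^2 - ∫ t in x n i..x n (i+1), (g t)^2)|
          + |∫ t in (x n 0)..(x n 1), (g t)^2| := abs_sub _ _
      _ ≤ ε/2 + ε/4 := add_le_add hsum hT0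
      _ < ε := by linarith
  exact ⟨htend, le_of_eq htend.limsup_eq⟩
end
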